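/- Let X be a Hilbert space, Y a Banach space, K ⊆ Y a closed convex cone, k ∈ K, Ω ⊆ X an open convex set, and f : X → Y continuous. Then the following are equivalent: (i) f is strongly 2-k-paraconvex (i.e. strongly α(·)-k-paraconvex with α(t) = t²) on Ω with constant C ≥ 0; (ii) for every y* in the dual cone K*, the function x ↦ y*(f(x)) + C·‖x‖²·y*(k) is convex on Ω. -/

import Mathlib

open Filter Topology Set

private lemma hilbert_combo {X : Type*} [NormedAddCommGroup X] [InnerProductSpace ℝ X]
    (x y : X) (l : ℝ) :
    ‖l • x + (1 - l) • y‖ ^ 2 = l * ‖x‖ ^ 2 + (1 - l) * ‖y‖ ^ 2 - l * (1 - l) * ‖x - y‖ ^ 2 := by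
  have e : ∀ z : X, ‖z‖ ^ 2 = (inner ℝ z z : ℝ) := fun z => (real_inner_self_eq_norm_sq z).symm
  simp only [e]
  simp only [inner_add_left, inner_add_right, inner_sub_left, inner_sub_right,
    real_inner_smul_left, real_inner_smul_right, real_inner_comm x y]
  ring

set_option maxHeartbeats 1600000 in
private lemma key_real (F : ℝ → ℝ) (hF : ContinuousOn F (Icc 0 1)) (c : ℝ) (hc : 0 ≤ c)
    (h0 : F 0 ≤ 0) (h1 : F 1 ≤ 0)
    (H : ∀ s ∈ Icc (0:ℝ) 1, ∀ t ∈ Icc (0:ℝ) 1, ∀ μ ∈ Icc (0:ℝ) 1,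
      F (μ * s + (1 - μ) * t) ≤ μ * F s + (1 - μ) * F t + c * (min μ (1 - μ)) ^ 2 * (s - t) ^ 2) :
    ∀ t ∈ Icc (0:ℝ) 1, F t ≤ 0 := by
  obtain ⟨t₀, ht₀, hmax⟩ := isCompact_Icc.exists_isMaxOn (Set.nonempty_Icc.2 zero_le_one) hF
  suffices hM : F t₀ ≤ 0 by
    intro t ht; exact le_trans (hmax ht) hM
  by_contra hM
  push_neg at hM
  set M := F t₀ with hMdef
  have ht₀0 : 0 < t₀ := by
    rcases eq_or_lt_of_le ht₀.1 with h | h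
    · exact absurd (h ▸ hM) (not_lt.2 h0)
    · exact h
  have ht₀1 : t₀ < 1 := by
    rcases eq_or_lt_of_le ht₀.2 with h | h
    · exact absurd (h ▸ hM) (not_lt.2 h1)
    · exact h
  set r : ℝ := min 1 (t₀ + t₀ * M / (2 * (c + 1))) with hr
  have hc1 : 0 < c + 1 := by linarith
  have hinc : 0 < t₀ * M / (2 * (c + 1)) := by positivity
  have hrt₀ : t₀ < r := lt_min ht₀1 (by linarith)
  have hr1 : r ≤ 1 := min_le_left _ _
  have hrpos : 0 < r := lt_trans ht₀0 hrt₀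
  set μ : ℝ := (r - t₀) / r with hμ
  have hμpos : 0 < μ := div_pos (by linarith) hrpos
  have hμle : μ ≤ 1 := by
    rw [hμ, div_le_one hrpos]; linarith
  have hcomb : μ * 0 + (1 - μ) * r = t₀ := by
    rw [hμ, mul_zero, zero_add, one_sub_div (ne_of_gt hrpos), div_mul_cancel₀ _ (ne_of_gt hrpos)]; ring
  have key := H 0 (by constructor <;> norm_num) r ⟨le_of_lt hrpos, hr1⟩ μ ⟨le_of_lt hμpos, hμle⟩
  rw [hcomb] at key
  have hFr : F r ≤ M := hmax ⟨le_of_lt hrpos, hr1⟩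
  have hmin : (min μ (1 - μ))^2 ≤ μ^2 := by
    have h1' : min μ (1 - μ) ≤ μ := min_le_left _ _
    have h2' : 0 ≤ min μ (1 - μ) := le_min (le_of_lt hμpos) (by linarith)
    nlinarith
  have hsq : (0 - r)^2 = r^2 := by ring
  have herr : c * (min μ (1 - μ))^2 * (0 - r)^2 ≤ c * μ^2 * r^2 := by
    rw [hsq]
    apply mul_le_mul_of_nonneg_right _ (sq_nonneg r)
    exact mul_le_mul_of_nonneg_left hmin hc
  have step1 : M ≤ μ * F 0 + (1 - μ) * F r + c * μ^2 * r^2 := le_trans key (by linarith)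
  have hμF0 : μ * F 0 ≤ 0 := mul_nonpos_of_nonneg_of_nonpos hμpos.le h0
  have hFr' : (1 - μ) * F r ≤ (1 - μ) * M := mul_le_mul_of_nonneg_left hFr (by linarith)
  have h2a : μ * M ≤ μ * (c * μ * r^2) := by nlinarith
  have step2 : M ≤ c * μ * r^2 := (mul_le_mul_iff_right₀ hμpos).mp h2a
  have hrr : r^2 ≤ 1 := by nlinarith
  have step3 : M ≤ c * μ := by nlinarith [mul_le_mul_of_nonneg_left hrr (mul_nonneg hc hμpos.le)]
  have hrub : r - t₀ ≤ t₀ * M / (2 * (c + 1)) := by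
    have := min_le_right 1 (t₀ + t₀ * M / (2 * (c + 1)))
    linarith [this]
  have hμub : μ ≤ M / (2 * (c + 1)) := by
    rw [hμ, div_le_div_iff₀ hrpos (by linarith)]
    calc (r - t₀) * (2 * (c + 1)) ≤ (t₀ * M / (2 * (c + 1))) * (2 * (c+1)) := by
          apply mul_le_mul_of_nonneg_right hrub (by linarith)
    _ = t₀ * M := by field_simp
    _ ≤ M * r := by nlinarith
  have h3 : c * μ ≤ c * (M / (2 * (c + 1))) := mul_le_mul_of_nonneg_left hμub hc
  have hfin : c * (M / (2 * (c+1))) < M := by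
    have hd : (0:ℝ) < 2*(c+1) := by linarith
    have hmd : M / (2*(c+1)) * (2*(c+1)) = M := div_mul_cancel₀ M (ne_of_gt hd)
    have hqpos : 0 < M / (2*(c+1)) := div_pos hM hd
    nlinarith [mul_pos hqpos (show (0:ℝ) < c+2 by linarith)]
  linarith

private lemma min_id (l : ℝ) : min l (1 - l) = l * (1 - l) + (min l (1 - l)) ^ 2 := by
  rcases le_total l (1 - l) with hmm | hmm
  · rw [min_eq_left hmm]; ring
  · rw [min_eq_right hmm]; ring

set_option maxHeartbeats 1600000

/-- For `X` a Hilbert space, `Y` a Banach space, `K ⊆ Y` a closed convex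
cone, `k ∈ K`, `Ω ⊆ X` open convex and `f : X → Y` continuous: `f` is strongly
`2`-`k`-paraconvex (i.e. `α(t) = t²`) on `Ω` with constant `C ≥ 0` iff for every `y*` in the
dual cone `K*` the function `x ↦ y*(f(x)) + C‖x‖² y*(k)` is convex on `Ω`. -/
theorem strongly_two_paraconvex_iff_convex_scalarization
    {X Y : Type*} [NormedAddCommGroup X] [InnerProductSpace ℝ X] [CompleteSpace X]
    [NormedAddCommGroup Y] [NormedSpace ℝ Y] [CompleteSpace Y]
    (K : Set Y) (hKclosed : IsClosed K) (hKconv : Convex ℝ K)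
    (hKcone : ∀ ⦃c : ℝ⦄, 0 ≤ c → ∀ ⦃y⦄, y ∈ K → c • y ∈ K)
    (k : Y) (hk : k ∈ K)
    (Ω : Set X) (hΩopen : IsOpen Ω) (hΩconv : Convex ℝ Ω)
    (f : X → Y) (hf : Continuous f) (C : ℝ) (hC : 0 ≤ C) :
    (∀ x ∈ Ω, ∀ y ∈ Ω, ∀ l : ℝ, 0 ≤ l → l ≤ 1 →
        l • f x + (1 - l) • f y + (C * min l (1 - l) * ‖x - y‖ ^ 2) • k
          - f (l • x + (1 - l) • y) ∈ K)
      ↔ (∀ φ : StrongDual ℝ Y, (∀ v ∈ K, 0 ≤ φ v) →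
          ConvexOn ℝ Ω (fun x => φ (f x) + C * ‖x‖ ^ 2 * φ k)) := by
  constructor
  · -- forward direction
    intro h φ hφ
    have hφk : 0 ≤ φ k := hφ k hk
    set g : X → ℝ := fun z => φ (f z) + C * ‖z‖ ^ 2 * φ k with hg
    have hgc : Continuous g := by
      rw [hg]; fun_prop
    refine ⟨hΩconv, fun x hx y hy a b ha hb hab => ?_⟩
    have hb' : b = 1 - a := by linarith
    subst hb'
    have ha1 : a ≤ 1 := by linarith
    set F : ℝ → ℝ := fun r => g (r • x + (1 - r) • y) - r * g x - (1 - r) * g y with hFdef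
    have hγ : Continuous fun r : ℝ => r • x + (1 - r) • y := by fun_prop
    have hFcont : Continuous F := by
      rw [hFdef]
      exact ((hgc.comp hγ).sub (by fun_prop)).sub (by fun_prop)
    have hF0 : F 0 ≤ 0 := by simp [hFdef]
    have hF1 : F 1 ≤ 0 := by simp [hFdef]
    have hc : 0 ≤ C * φ k * ‖x - y‖ ^ 2 :=
      mul_nonneg (mul_nonneg hC hφk) (sq_nonneg _)
    have H : ∀ s ∈ Icc (0:ℝ) 1, ∀ t ∈ Icc (0:ℝ) 1, ∀ μ ∈ Icc (0:ℝ) 1,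
        F (μ * s + (1 - μ) * t) ≤ μ * F s + (1 - μ) * F t
          + (C * φ k * ‖x - y‖ ^ 2) * (min μ (1 - μ)) ^ 2 * (s - t) ^ 2 := by
      intro s hs t ht μ hμ
      set u := s • x + (1 - s) • y with hu
      set v := t • x + (1 - t) • y with hv
      have huΩ : u ∈ Ω := by
        rw [hu]; exact hΩconv hx hy hs.1 (by linarith [hs.2]) (by ring)
      have hvΩ : v ∈ Ω := by
        rw [hv]; exact hΩconv hx hy ht.1 (by linarith [ht.2]) (by ring)
      have hmem := h u huΩ v hvΩ μ hμ.1 hμ.2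
      have hpos := hφ _ hmem
      simp only [map_add, map_sub, map_smul, smul_eq_mul] at hpos
      have hcomb : μ • u + (1 - μ) • v
          = (μ * s + (1 - μ) * t) • x + (1 - (μ * s + (1 - μ) * t)) • y := by
        rw [hu, hv]; module
      have huv : ‖u - v‖ ^ 2 = (s - t) ^ 2 * ‖x - y‖ ^ 2 := by
        have e : u - v = (s - t) • (x - y) := by rw [hu, hv]; module
        rw [e, norm_smul, mul_pow, Real.norm_eq_abs, sq_abs]
      have hz2 := hilbert_combo u v μ
      have hminid := min_id μ
      rw [huv] at hpos hz2
      simp only [hFdef, hg]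
      rw [← hu, ← hv, ← hcomb, hz2]
      have hmin2 : (min μ (1 - μ)) ^ 2 = min μ (1 - μ) - μ * (1 - μ) := by linarith
      rw [hmin2]
      ring_nf
      ring_nf at hpos
      linarith [hpos]
    have main := key_real F hFcont.continuousOn (C * φ k * ‖x - y‖ ^ 2) hc hF0 hF1 H
    have hFa := main a ⟨ha, ha1⟩
    rw [hFdef] at hFa
    simp only at hFa
    rw [smul_eq_mul, smul_eq_mul]
    linarith
  · -- reverse direction
    intro hconv x hx y hy l hl0 hl1
    by_contra hw
    obtain ⟨ψ, u, hub, hlb⟩ := geometric_hahn_banach_closed_point hKconv hKclosed hw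
    have h0K : (0:Y) ∈ K := by
      have := hKcone (le_refl (0:ℝ)) hk; simpa using this
    have hu0 : 0 < u := by have := hub 0 h0K; simpa using this
    have hψK : ∀ v ∈ K, ψ v ≤ 0 := by
      intro v hv
      by_contra hvp
      push_neg at hvp
      have hc' : 0 ≤ (u + 1) / (ψ v) := by positivity
      have h2 := hub _ (hKcone hc' hv)
      rw [map_smul, smul_eq_mul, div_mul_cancel₀ _ (ne_of_gt hvp)] at h2
      linarith
    have hφ : ∀ v ∈ K, 0 ≤ (-ψ) v := by
      intro v hv
      simpa using hψK v hv
    have hcv := hconv (-ψ) hφ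
    have hineq := hcv.2 hx hy hl0 (by linarith : (0:ℝ) ≤ 1 - l) (by ring : l + (1 - l) = 1)
    simp only [smul_eq_mul, ContinuousLinearMap.neg_apply] at hineq
    rw [hilbert_combo x y l] at hineq
    simp only [map_add, map_sub, map_smul, smul_eq_mul] at hlb
    have hp : ψ k ≤ 0 := hψK k hk
    have hminid := min_id l
    have hminsq : 0 ≤ min l (1 - l) - l * (1 - l) := by nlinarith [sq_nonneg (min l (1 - l))]
    have hkey : C * (min l (1 - l) - l * (1 - l)) * ‖x - y‖ ^ 2 * ψ k ≤ 0 :=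
      mul_nonpos_of_nonneg_of_nonpos
        (mul_nonneg (mul_nonneg hC hminsq) (sq_nonneg _)) hp
    linarith [hineq, hlb, hkey, hu0]
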